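/- (Dilaton and string equations for p̃.) For every k ∈ ℕ, every n ≥ 2 and all m_1,…,m_n ∈ ℚ, the dilaton equation holds: p̃_k(m_1,m_2;m_3,…,m_n,1) − p̃_k(m_1,m_2;m_3,…,m_n,0) = p̃_{k−1}(m_1,m_2;m_3,…,m_n) (with p̃_{−1} of several variables := 0). Moreover, for every k ∈ ℕ, all m_1, m_2 ∈ ℤ_{≥0}+1/2 and all m_3,…,m_n ∈ ℤ_{≥0}, the string equation holds: (k+1)·p̃_{k+1}(m_1,m_2;m_3,…,m_n) = (m_1+⋯+m_n−k−1)·p̃_k(m_1,m_2;m_3,…,m_n) + Σ_{i=1}^n Σ_{0<j<m_i} 2j·p̃_k(m_1,…,m_{i−1},j,m_{i+1},…,m_n), where for i = 1, 2 the inner sum runs over half-integer values of j (j ∈ ℤ+1/2) and for i ≥ 3 it runs over integer values of j. -/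

import Mathlib

/-- Generalized binomial coefficient `binom(x,k) = x(x-1)⋯(x-k+1)/k!`. -/
def qbinom (x : ℚ) (k : ℕ) : ℚ := (∏ i ∈ Finset.range k, (x - i)) / (Nat.factorial k)

/-- `q_k(m) = binom(m,k)·binom(m+k-1,k)`. -/
def qPoly (k : ℕ) (m : ℚ) : ℚ := qbinom m k * qbinom (m + k - 1) k

/-- `p̃_k(m) = binom(m-1/2,k)·binom(m+k-1/2,k)`. -/
def ptilde (k : ℕ) (m : ℚ) : ℚ := qbinom (m - 1/2) k * qbinom (m + k - 1/2) k

/-- Multivariate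
`p̃_k(m_1,m_2;m_3,…,m_n) = Σ_{k_1+⋯+k_n=k} p̃_{k_1}(m_1)·p̃_{k_2}(m_2)·q_{k_3}(m_3)⋯q_{k_n}(m_n)`. -/
def ptildeMulti (k n : ℕ) (m : Fin n → ℚ) : ℚ :=
  ∑ f ∈ Finset.Nat.antidiagonalTuple n k,
    ∏ i : Fin n, (if i.val < 2 then ptilde (f i) (m i) else qPoly (f i) (m i))


lemma qbinom_zero (x : ℚ) : qbinom x 0 = 1 := by simp [qbinom]

lemma qbinom_succ (x : ℚ) (k : ℕ) : qbinom x (k+1) = qbinom x k * (x - k) / (k+1) := by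
  simp only [qbinom, Finset.prod_range_succ, Nat.factorial_succ]
  push_cast
  rw [div_mul_eq_mul_div, div_div, mul_comm ((k:ℚ)+1)]

lemma qbinom_succ' (x : ℚ) (k : ℕ) : qbinom x (k+1) = x / (k+1) * qbinom (x-1) k := by
  simp only [qbinom, Nat.factorial_succ]
  rw [Finset.prod_range_succ']
  push_cast
  have : ∀ i ∈ Finset.range k, x - ((i:ℚ)+1) = (x - 1) - i := by intro i _; ring
  rw [Finset.prod_congr rfl this, sub_zero, div_eq_iff (by positivity)]
  field_simp

lemma qPoly_rec (k : ℕ) (m : ℚ) : ((k:ℚ)+1)^2 * qPoly (k+1) m = (m^2 - (k:ℚ)^2) * qPoly k m := by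
  have h1 : qPoly (k+1) m = qbinom m (k+1) * qbinom (m + k) (k+1) := by
    simp only [qPoly]; push_cast; ring_nf
  rw [h1, qbinom_succ m k, qbinom_succ' (m + k) k, qPoly]
  have hk : ((k:ℚ)+1) ≠ 0 := by positivity
  have : m + (k:ℚ) - 1 = m + k - 1 := by ring
  field_simp
  ring

lemma ptilde_rec (k : ℕ) (m : ℚ) :
    ((k:ℚ)+1)^2 * ptilde (k+1) m = (m^2 - ((k:ℚ)+1/2)^2) * ptilde k m := by
  have h1 : ptilde (k+1) m = qbinom (m - 1/2) (k+1) * qbinom ((m + k + 1/2)) (k+1) := by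
    simp only [ptilde]; push_cast; ring_nf
  rw [h1, qbinom_succ (m - 1/2) k, qbinom_succ' (m + k + 1/2) k, ptilde]
  have hk : ((k:ℚ)+1) ≠ 0 := by positivity
  have h2 : m + (k:ℚ) + 1/2 - 1 = m + k - 1/2 := by ring
  rw [h2]
  field_simp
  ring

lemma qPoly_star (k : ℕ) (m : ℚ) :
    m*(m+1-k)*qPoly k (m+1) = (m+1)*(m+k)*qPoly k m := by
  induction k with
  | zero => simp [qPoly, qbinom]; ring
  | succ k ih =>
    have hk : (((k:ℚ)+1)^2) ≠ 0 := by positivity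
    apply mul_left_cancel₀ hk
    push_cast
    linear_combination (m*(m+1-((k:ℚ)+1))) * qPoly_rec k (m+1) -
      ((m+1)*(m+(k:ℚ)+1)) * qPoly_rec k m + ((m-k)*(m+1+k)) * ih

lemma ptilde_star (k : ℕ) (m : ℚ) :
    (m+1/2-k)*ptilde k (m+1) = (m+1/2+k)*ptilde k m := by
  induction k with
  | zero => simp [ptilde, qbinom]
  | succ k ih =>
    have hk : (((k:ℚ)+1)^2) ≠ 0 := by positivity
    apply mul_left_cancel₀ hk
    push_cast
    linear_combination (m+1/2-((k:ℚ)+1)) * ptilde_rec k (m+1) -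
      (m+1/2+(k:ℚ)+1) * ptilde_rec k m + ((m-1/2-k)*(m+3/2+k)) * ih

lemma oneVarQ (k : ℕ) (m : ℚ) :
    ((k:ℚ)+1)*qPoly (k+1) (m+1) + k*qPoly k (m+1)
      = (m+1)*qPoly k (m+1) + ((k:ℚ)+1)*qPoly (k+1) m + k*qPoly k m + m*qPoly k m := by
  have hk : ((k:ℚ)+1) ≠ 0 := by positivity
  apply mul_left_cancel₀ hk
  linear_combination qPoly_rec k (m+1) - qPoly_rec k m + qPoly_star k m

lemma oneVarP (k : ℕ) (m : ℚ) :
    ((k:ℚ)+1)*ptilde (k+1) (m+1) + k*ptilde k (m+1)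
      = (m+1/2)*ptilde k (m+1) + ((k:ℚ)+1)*ptilde (k+1) m + k*ptilde k m + (m+1/2)*ptilde k m := by
  have hk : ((k:ℚ)+1) ≠ 0 := by positivity
  apply mul_left_cancel₀ hk
  linear_combination ptilde_rec k (m+1) - ptilde_rec k m + (m+1/2) * ptilde_star k m

lemma qbinom_zero_left (k : ℕ) : qbinom 0 (k+1) = 0 := by
  simp only [qbinom]
  rw [Finset.prod_eq_zero (Finset.mem_range.2 (Nat.succ_pos k)) (by simp)]
  simp

lemma qPoly_at_zero (k : ℕ) : qPoly (k+1) 0 = 0 := by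
  simp [qPoly, qbinom_zero_left]

lemma ptilde_at_half (k : ℕ) : ptilde (k+1) (1/2) = 0 := by
  have : (1:ℚ)/2 - 1/2 = 0 := by ring
  simp [ptilde, this, qbinom_zero_left]

lemma slotQ (k M : ℕ) :
    ((k:ℚ)+1) * qPoly (k+1) M + k * qPoly k M
      = M * qPoly k M + ∑ j ∈ Finset.Ico 1 M, 2*(j:ℚ) * qPoly k j := by
  induction M with
  | zero =>
    simp only [Nat.cast_zero, Finset.Ico_self, Finset.sum_empty, qPoly_at_zero, zero_mul, add_zero, mul_zero]
    cases k with
    | zero => simp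
    | succ j => simp [qPoly_at_zero]
  | succ M ih =>
    have hsum : ∑ j ∈ Finset.Ico 1 (M+1), 2*(j:ℚ) * qPoly k j
        = (∑ j ∈ Finset.Ico 1 M, 2*(j:ℚ) * qPoly k j) + 2*(M:ℚ) * qPoly k M := by
      cases M with
      | zero => simp
      | succ m => rw [Finset.sum_Ico_succ_top (Nat.succ_le_succ (Nat.zero_le m))]
    push_cast
    rw [hsum]
    have h1 := oneVarQ k (M:ℚ)
    linear_combination h1 + ih

lemma slotP (k M : ℕ) :
    ((k:ℚ)+1) * ptilde (k+1) ((M:ℚ)+1/2) + k * ptilde k ((M:ℚ)+1/2)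
      = M * ptilde k ((M:ℚ)+1/2)
        + ∑ J ∈ Finset.range M, (2*(J:ℚ)+1) * ptilde k ((J:ℚ)+1/2) := by
  induction M with
  | zero =>
    simp only [Nat.cast_zero, Finset.range_zero, Finset.sum_empty, zero_add, zero_mul, add_zero]
    cases k with
    | zero => rw [ptilde_at_half 0]; simp
    | succ j => rw [ptilde_at_half (j+1), ptilde_at_half j]; ring
  | succ M ih =>
    rw [Finset.sum_range_succ]
    push_cast
    have h1 := oneVarP k ((M:ℚ)+1/2)
    have e1 : (M:ℚ)+1/2+1 = (M:ℚ)+1+1/2 := by ring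
    rw [e1] at h1
    linear_combination h1 + ih

lemma qPoly_zero_k (m : ℚ) : qPoly 0 m = 1 := by simp [qPoly, qbinom]

lemma qPoly_one_val (j : ℕ) : qPoly j 1 = if j ≤ 1 then 1 else 0 := by
  match j with
  | 0 => simp [qPoly_zero_k]
  | 1 => norm_num [qPoly, qbinom]
  | (j+2) =>
    have h1 : qbinom 1 (j+2) = 0 := by
      simp only [qbinom]
      rw [Finset.prod_eq_zero (i := 1) (by simp) (by norm_num)]
      simp
    simp [qPoly, h1]

lemma qPoly_zero_val (j : ℕ) : qPoly j 0 = if j = 0 then 1 else 0 := by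
  match j with
  | 0 => simp [qPoly_zero_k]
  | (j+1) => simp [qPoly_at_zero]

def mconv {n : ℕ} (F : Fin n → ℕ → ℚ) (k : ℕ) : ℚ :=
  ∑ f ∈ Finset.Nat.antidiagonalTuple n k, ∏ i, F i (f i)

lemma mconv_nil (F : Fin 0 → ℕ → ℚ) (k : ℕ) : mconv F k = if k = 0 then 1 else 0 := by
  cases k with
  | zero => simp [mconv, Finset.Nat.antidiagonalTuple_zero_zero]
  | succ k => simp [mconv, Finset.Nat.antidiagonalTuple_zero_succ]

lemma mconv_cons {n : ℕ} (F : Fin (n+1) → ℕ → ℚ) (k : ℕ) :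
    mconv F k = ∑ ab ∈ Finset.HasAntidiagonal.antidiagonal k, F 0 ab.1 * mconv (fun i => F i.succ) ab.2 := by
  simp only [mconv, Finset.mul_sum]
  rw [Finset.sum_sigma']
  symm
  refine Finset.sum_nbij' (i := fun p => Fin.cons p.1.1 p.2)
    (j := fun f => ⟨⟨f 0, ∑ i : Fin n, f (Fin.succ i)⟩, fun i : Fin n => f (Fin.succ i)⟩) ?_ ?_ ?_ ?_ ?_
  · rintro ⟨⟨a, b⟩, f⟩ hp
    simp only [Finset.mem_sigma, Finset.HasAntidiagonal.mem_antidiagonal, Finset.Nat.mem_antidiagonalTuple] at hp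
    simp only [Finset.Nat.mem_antidiagonalTuple, Fin.sum_cons, hp.2]
    exact hp.1
  · intro f hf
    simp only [Finset.Nat.mem_antidiagonalTuple] at hf
    simp only [Finset.mem_sigma, Finset.HasAntidiagonal.mem_antidiagonal, Finset.Nat.mem_antidiagonalTuple]
    exact ⟨by rw [← hf, Fin.sum_univ_succ], trivial⟩
  · rintro ⟨⟨a, b⟩, f⟩ hp
    simp only [Finset.mem_sigma, Finset.HasAntidiagonal.mem_antidiagonal, Finset.Nat.mem_antidiagonalTuple] at hp
    simp [Fin.cons_zero, Fin.cons_succ, hp.2]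
  · intro f hf
    exact Fin.cons_self_tail f
  · rintro ⟨⟨a, b⟩, f⟩ hp
    rw [Fin.prod_univ_succ]
    simp [Fin.cons_zero, Fin.cons_succ]

lemma mconv_snoc {n : ℕ} (F : Fin n → ℕ → ℚ) (c : ℕ → ℚ) (k : ℕ) :
    mconv (Fin.snoc F c) k = ∑ ab ∈ Finset.HasAntidiagonal.antidiagonal k, mconv F ab.1 * c ab.2 := by
  simp only [mconv, Finset.sum_mul]
  rw [Finset.sum_sigma']
  symm
  refine Finset.sum_nbij' (i := fun p => Fin.snoc p.2 p.1.2)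
    (j := fun f => ⟨⟨∑ i, f (Fin.castSucc i), f (Fin.last n)⟩, fun i => f (Fin.castSucc i)⟩)
    ?_ ?_ ?_ ?_ ?_
  · rintro ⟨⟨a, b⟩, f⟩ hp
    simp only [Finset.mem_sigma, Finset.HasAntidiagonal.mem_antidiagonal, Finset.Nat.mem_antidiagonalTuple] at hp
    simp only [Finset.Nat.mem_antidiagonalTuple, Fin.sum_univ_castSucc, Fin.snoc_castSucc,
      Fin.snoc_last, hp.2]
    exact hp.1
  · intro f hf
    simp only [Finset.Nat.mem_antidiagonalTuple] at hf
    simp only [Finset.mem_sigma, Finset.HasAntidiagonal.mem_antidiagonal, Finset.Nat.mem_antidiagonalTuple]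
    exact ⟨by rw [← hf, Fin.sum_univ_castSucc], trivial⟩
  · rintro ⟨⟨a, b⟩, f⟩ hp
    simp only [Finset.mem_sigma, Finset.HasAntidiagonal.mem_antidiagonal, Finset.Nat.mem_antidiagonalTuple] at hp
    simp [Fin.snoc_castSucc, Fin.snoc_last, hp.2]
  · intro f hf
    exact funext fun i => by
      induction i using Fin.lastCases with
      | last => simp
      | cast i => simp
  · rintro ⟨⟨a, b⟩, f⟩ hp
    rw [Fin.prod_univ_castSucc]
    simp [Fin.snoc_castSucc, Fin.snoc_last]

lemma shift_left (u v : ℕ → ℚ) (k : ℕ) :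
    ∑ ab ∈ Finset.HasAntidiagonal.antidiagonal (k+1), (ab.1 : ℚ) * u ab.1 * v ab.2
      = ∑ ab ∈ Finset.HasAntidiagonal.antidiagonal k, ((ab.1:ℚ)+1) * u (ab.1+1) * v ab.2 := by
  rw [Finset.Nat.antidiagonal_succ]
  simp [Finset.sum_map]

lemma shift_right (u v : ℕ → ℚ) (k : ℕ) :
    ∑ ab ∈ Finset.HasAntidiagonal.antidiagonal (k+1), u ab.1 * ((ab.2 : ℚ) * v ab.2)
      = ∑ ab ∈ Finset.HasAntidiagonal.antidiagonal k, u ab.1 * (((ab.2:ℚ)+1) * v (ab.2+1)) := by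
  rw [Finset.Nat.antidiagonal_succ']
  simp [Finset.sum_map]

lemma E_antidiagonal (u v : ℕ → ℚ) (k : ℕ) :
    ((k:ℚ)+1) * ∑ ab ∈ Finset.HasAntidiagonal.antidiagonal (k+1), u ab.1 * v ab.2
      + (k:ℚ) * ∑ ab ∈ Finset.HasAntidiagonal.antidiagonal k, u ab.1 * v ab.2
    = (∑ ab ∈ Finset.HasAntidiagonal.antidiagonal k, (((ab.1:ℚ)+1) * u (ab.1+1) + ab.1 * u ab.1) * v ab.2)
      + ∑ ab ∈ Finset.HasAntidiagonal.antidiagonal k, u ab.1 * (((ab.2:ℚ)+1) * v (ab.2+1) + ab.2 * v ab.2) := by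
  have h1 : ((k:ℚ)+1) * ∑ ab ∈ Finset.HasAntidiagonal.antidiagonal (k+1), u ab.1 * v ab.2
      = ∑ ab ∈ Finset.HasAntidiagonal.antidiagonal (k+1), ((ab.1:ℚ) * u ab.1 * v ab.2 + u ab.1 * ((ab.2:ℚ) * v ab.2)) := by
    rw [Finset.mul_sum]
    apply Finset.sum_congr rfl
    rintro ⟨a, b⟩ hab
    simp only [Finset.HasAntidiagonal.mem_antidiagonal] at hab
    have : ((a:ℚ) + b) = ((k:ℚ)+1) := by exact_mod_cast congrArg (Nat.cast (R := ℚ)) hab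
    linear_combination (-(u a * v b)) * this
  have h2 : (k:ℚ) * ∑ ab ∈ Finset.HasAntidiagonal.antidiagonal k, u ab.1 * v ab.2
      = ∑ ab ∈ Finset.HasAntidiagonal.antidiagonal k, ((ab.1:ℚ) * u ab.1 * v ab.2 + u ab.1 * ((ab.2:ℚ) * v ab.2)) := by
    rw [Finset.mul_sum]
    apply Finset.sum_congr rfl
    rintro ⟨a, b⟩ hab
    simp only [Finset.HasAntidiagonal.mem_antidiagonal] at hab
    have : ((a:ℚ) + b) = (k:ℚ) := by exact_mod_cast congrArg (Nat.cast (R := ℚ)) hab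
    linear_combination (-(u a * v b)) * this
  rw [h1, h2, Finset.sum_add_distrib, shift_left, shift_right]
  simp only [add_mul, mul_add, Finset.sum_add_distrib]
  ring

lemma mconv_E {n : ℕ} (F : Fin n → ℕ → ℚ) (μ : Fin n → ℚ) (T : Fin n → ℕ → ℚ)
    (h : ∀ i (j : ℕ), ((j:ℚ)+1) * F i (j+1) + (j:ℚ) * F i j = μ i * F i j + T i j) (k : ℕ) :
    ((k:ℚ)+1) * mconv F (k+1) + (k:ℚ) * mconv F k
      = (∑ i, μ i) * mconv F k + ∑ i, mconv (Function.update F i (T i)) k := by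
  induction n generalizing k with
  | zero =>
    simp only [Finset.univ_eq_empty, Finset.sum_empty, zero_mul, add_zero, mconv_nil]
    cases k <;> simp
  | succ n ih =>
    have hG := ih (fun i => F i.succ) (fun i => μ i.succ) (fun i => T i.succ)
      (fun i j => h i.succ j)
    beta_reduce at hG
    rw [mconv_cons F (k+1), mconv_cons F k, E_antidiagonal (F 0) (fun b => mconv (fun i => F i.succ) b) k]
    have hfirst : (∑ ab ∈ Finset.HasAntidiagonal.antidiagonal k,
        (((ab.1:ℚ)+1) * F 0 (ab.1+1) + ab.1 * F 0 ab.1) * mconv (fun i => F i.succ) ab.2)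
        = μ 0 * mconv F k + mconv (Function.update F 0 (T 0)) k := by
      rw [mconv_cons F k, mconv_cons (Function.update F 0 (T 0)) k, Finset.mul_sum]
      rw [← Finset.sum_add_distrib]
      apply Finset.sum_congr rfl
      rintro ⟨a, b⟩ hab
      have hu : Function.update F 0 (T 0) 0 = T 0 := Function.update_self 0 (T 0) F
      have ht : (fun i : Fin n => Function.update F 0 (T 0) i.succ) = fun i => F i.succ := by
        funext i
        exact Function.update_of_ne (Fin.succ_ne_zero i) (T 0) F
      rw [hu, ht]
      simp only []
      linear_combination (mconv (fun i => F i.succ) b) * h 0 a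
    have hsecond : (∑ ab ∈ Finset.HasAntidiagonal.antidiagonal k,
        F 0 ab.1 * (((ab.2:ℚ)+1) * mconv (fun i => F i.succ) (ab.2+1)
          + ab.2 * mconv (fun i => F i.succ) ab.2))
        = (∑ i : Fin n, μ i.succ) * mconv F k
          + ∑ i : Fin n, mconv (Function.update F i.succ (T i.succ)) k := by
      have step : ∀ ab ∈ Finset.HasAntidiagonal.antidiagonal k,
          F 0 ab.1 * (((ab.2:ℚ)+1) * mconv (fun i => F i.succ) (ab.2+1)
            + (ab.2:ℚ) * mconv (fun i => F i.succ) ab.2)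
          = (∑ i : Fin n, μ i.succ) * (F 0 ab.1 * mconv (fun i => F i.succ) ab.2)
            + ∑ i : Fin n, F 0 ab.1 *
                mconv (Function.update (fun j => F j.succ) i (T i.succ)) ab.2 := by
        rintro ⟨a, b⟩ hab
        simp only [hG b]
        rw [mul_add, Finset.mul_sum]
        ring
      rw [Finset.sum_congr rfl step, Finset.sum_add_distrib]
      congr 1
      · rw [← Finset.mul_sum, ← mconv_cons F k]
      · rw [Finset.sum_comm]
        apply Finset.sum_congr rfl
        intro i _
        rw [mconv_cons (Function.update F i.succ (T i.succ)) k]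
        apply Finset.sum_congr rfl
        rintro ⟨a, b⟩ hab
        have h0 : Function.update F i.succ (T i.succ) 0 = F 0 :=
          Function.update_of_ne (Fin.succ_ne_zero i).symm (T i.succ) F
        have ht : (fun j : Fin n => Function.update F i.succ (T i.succ) j.succ)
            = Function.update (fun j : Fin n => F j.succ) i (T i.succ) := by
          funext j
          by_cases hj : j = i
          · subst hj; simp [Function.update_self]
          · rw [Function.update_of_ne (fun hc => hj (Fin.succ_injective n hc)) (T i.succ) F,
              Function.update_of_ne hj]
        rw [h0, ht]
    rw [hfirst, hsecond, ← mconv_cons F k, Fin.sum_univ_succ, Fin.sum_univ_succ]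
    ring

lemma mconv_update_sum {n : ℕ} (F : Fin n → ℕ → ℚ) (i₀ : Fin n) {β : Type*} (s : Finset β)
    (c : β → ℚ) (u : β → ℕ → ℚ) (k : ℕ) :
    mconv (Function.update F i₀ (fun j => ∑ x ∈ s, c x * u x j)) k
      = ∑ x ∈ s, c x * mconv (Function.update F i₀ (u x)) k := by
  simp only [mconv, Finset.mul_sum]
  rw [Finset.sum_comm]
  apply Finset.sum_congr rfl
  intro f _
  have key : ∀ g : ℕ → ℚ, ∏ i, Function.update F i₀ g i (f i)
      = g (f i₀) * ∏ i ∈ Finset.univ.erase i₀, F i (f i) := by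
    intro g
    rw [← Finset.mul_prod_erase Finset.univ _ (Finset.mem_univ i₀)]
    congr 1
    · rw [Function.update_self]
    · apply Finset.prod_congr rfl
      intro i hi
      rw [Function.update_of_ne (Finset.ne_of_mem_erase hi)]
  rw [key]
  simp only [key, Finset.sum_mul]
  apply Finset.sum_congr rfl
  intro x _
  ring

def famF {n : ℕ} (mq : Fin n → ℚ) : Fin n → ℕ → ℚ :=
  fun i j => if i.val < 2 then ptilde j (mq i) else qPoly j (mq i)

lemma ptildeMulti_eq {n : ℕ} (k : ℕ) (mq : Fin n → ℚ) :
    ptildeMulti k n mq = mconv (famF mq) k := rfl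

lemma famF_snoc (n : ℕ) (hn : 2 ≤ n) (m : Fin n → ℚ) (c : ℚ) :
    famF (Fin.snoc m c : Fin (n+1) → ℚ) = Fin.snoc (famF m) (fun j => qPoly j c) := by
  funext i
  induction i using Fin.lastCases with
  | last =>
    funext j
    simp only [famF, Fin.snoc_last, Fin.val_last]
    rw [if_neg (by omega)]
  | cast i =>
    funext j
    simp [famF, Fin.snoc_castSucc, Fin.coe_castSucc]

lemma dilaton (k n : ℕ) (hn : 2 ≤ n) (m : Fin n → ℚ) :
    ptildeMulti k (n + 1) (Fin.snoc m 1) - ptildeMulti k (n + 1) (Fin.snoc m 0) =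
      (if k = 0 then 0 else ptildeMulti (k - 1) n m) := by
  rw [ptildeMulti_eq, ptildeMulti_eq, famF_snoc n hn m 1, famF_snoc n hn m 0,
    mconv_snoc, mconv_snoc, ← Finset.sum_sub_distrib]
  have hterm : ∀ ab ∈ Finset.HasAntidiagonal.antidiagonal k,
      mconv (famF m) ab.1 * qPoly ab.2 1 - mconv (famF m) ab.1 * qPoly ab.2 0
        = if ab.2 = 1 then mconv (famF m) ab.1 else 0 := by
    rintro ⟨a,b⟩ _
    simp only [qPoly_one_val, qPoly_zero_val]
    rcases b with _ | _ | b <;> norm_num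
  rw [Finset.sum_congr rfl hterm]
  cases k with
  | zero => simp
  | succ j =>
    rw [Finset.sum_eq_single_of_mem ((j,1)) (by simp)]
    · simp [ptildeMulti_eq]
    · rintro ⟨a,b⟩ hab hne
      simp only [Finset.HasAntidiagonal.mem_antidiagonal] at hab
      have hb : b ≠ 1 := by
        rintro rfl
        apply hne
        have : a = j := by omega
        rw [this]
      simp [hb]

lemma famF_update_lt {n : ℕ} (mq : Fin n → ℚ) (i : Fin n) (hi : i.val < 2) (v : ℚ) :
    Function.update (famF mq) i (fun j => ptilde j v) = famF (Function.update mq i v) := by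
  funext i'
  by_cases h : i' = i
  · subst h
    funext j
    simp [famF, Function.update_self, hi]
  · rw [Function.update_of_ne h]
    funext j
    simp [famF, Function.update_of_ne h]

lemma famF_update_ge {n : ℕ} (mq : Fin n → ℚ) (i : Fin n) (hi : ¬ i.val < 2) (v : ℚ) :
    Function.update (famF mq) i (fun j => qPoly j v) = famF (Function.update mq i v) := by
  funext i'
  by_cases h : i' = i
  · subst h
    funext j
    simp [famF, Function.update_self, hi]
  · rw [Function.update_of_ne h]
    funext j
    simp [famF, Function.update_of_ne h]

lemma string_eq (k n : ℕ) (hn : 2 ≤ n) (M : Fin n → ℕ) (mq : Fin n → ℚ)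
    (hmq : mq = fun i => if i.val < 2 then (M i : ℚ) + 1/2 else (M i : ℚ)) :
    (k + 1 : ℚ) * ptildeMulti (k + 1) n mq =
      ((∑ i, mq i) - k - 1) * ptildeMulti k n mq +
        ∑ i : Fin n,
          (if i.val < 2 then
            ∑ J ∈ Finset.range (M i),
              (2 * (J : ℚ) + 1) * ptildeMulti k n (Function.update mq i ((J : ℚ) + 1/2))
          else
            ∑ j ∈ Finset.Ico 1 (M i),
              (2 * (j : ℚ)) * ptildeMulti k n (Function.update mq i (j : ℚ))) := by
  have key := mconv_E (famF mq) (fun i => (M i : ℚ))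
    (fun i j => if i.val < 2 then ∑ J ∈ Finset.range (M i), (2*(J:ℚ)+1) * ptilde j ((J:ℚ)+1/2)
      else ∑ x ∈ Finset.Ico 1 (M i), (2*(x:ℚ)) * qPoly j (x:ℚ)) ?_ k
  · have hsum : (∑ i, mq i) = (∑ i, ((M i : ℚ))) + 1 := by
      rw [hmq]
      have split : ∀ i : Fin n, (if i.val < 2 then (M i : ℚ) + 1/2 else (M i : ℚ))
          = (M i : ℚ) + (if i.val < 2 then (1/2:ℚ) else 0) := by
        intro i; by_cases h : i.val < 2 <;> simp [h]
      rw [Finset.sum_congr rfl (fun i _ => split i), Finset.sum_add_distrib]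
      congr 1
      rw [← Finset.sum_filter]
      have hf : Finset.filter (fun i : Fin n => i.val < 2) Finset.univ
          = {(⟨0, by omega⟩ : Fin n), ⟨1, by omega⟩} := by
        ext x
        simp only [Finset.mem_filter, Finset.mem_univ, true_and, Finset.mem_insert,
          Finset.mem_singleton, Fin.ext_iff]
        omega
      rw [hf, Finset.sum_insert (by simp [Fin.ext_iff]), Finset.sum_singleton]
      norm_num
    have hupd : ∀ i : Fin n,
        mconv (Function.update (famF mq) i
          (fun j => if i.val < 2 then ∑ J ∈ Finset.range (M i), (2*(J:ℚ)+1) * ptilde j ((J:ℚ)+1/2)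
            else ∑ x ∈ Finset.Ico 1 (M i), (2*(x:ℚ)) * qPoly j (x:ℚ))) k
        = (if i.val < 2 then
            ∑ J ∈ Finset.range (M i),
              (2 * (J : ℚ) + 1) * ptildeMulti k n (Function.update mq i ((J : ℚ) + 1/2))
          else
            ∑ j ∈ Finset.Ico 1 (M i),
              (2 * (j : ℚ)) * ptildeMulti k n (Function.update mq i (j : ℚ))) := by
      intro i
      by_cases hi : i.val < 2
      · simp only [hi, if_true]
        rw [show (fun j => ∑ J ∈ Finset.range (M i), (2*(J:ℚ)+1) * ptilde j ((J:ℚ)+1/2))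
            = (fun j => ∑ J ∈ Finset.range (M i), (2*(J:ℚ)+1) * (fun J' j' => ptilde j' ((J':ℚ)+1/2)) J j) from rfl]
        rw [mconv_update_sum]
        apply Finset.sum_congr rfl
        intro J _
        rw [famF_update_lt mq i hi ((J:ℚ)+1/2), ptildeMulti_eq]
      · simp only [hi, if_false]
        rw [show (fun j => ∑ x ∈ Finset.Ico 1 (M i), (2*(x:ℚ)) * qPoly j (x:ℚ))
            = (fun j => ∑ x ∈ Finset.Ico 1 (M i), (2*(x:ℚ)) * (fun x' j' => qPoly j' ((x':ℚ))) x j) from rfl]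
        rw [mconv_update_sum]
        apply Finset.sum_congr rfl
        intro x _
        rw [famF_update_ge mq i hi ((x:ℚ)), ptildeMulti_eq]
    rw [ptildeMulti_eq (k+1), ptildeMulti_eq k, hsum]
    rw [Finset.sum_congr rfl (fun i _ => hupd i)] at key
    linear_combination key
  · intro i j
    by_cases hi : i.val < 2
    · have hv : famF mq i = fun j => ptilde j ((M i : ℚ) + 1/2) := by
        funext j'
        simp only [famF, hi, if_true, hmq]
      rw [hv]
      simp only [hi, if_true]
      exact slotP j (M i)
    · have hv : famF mq i = fun j => qPoly j ((M i : ℚ)) := by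
        funext j'
        simp only [famF, hi, if_false, hmq]
      rw [hv]
      simp only [hi, if_false]
      exact slotQ j (M i)

/-- Dilaton and string equations for `p̃_k`: the dilaton equation holds for all rational
variables, and the string equation holds when `m_1, m_2 ∈ ℤ_{≥0} + 1/2` and
`m_3,…,m_n ∈ ℤ_{≥0}`, the inner sum over `0 < j < m_i` running over half-integers for
`i = 1, 2` and over integers for `i ≥ 3`. -/
theorem stmt5 (k n : ℕ) (hn : 2 ≤ n) :
    (∀ m : Fin n → ℚ,
      ptildeMulti k (n + 1) (Fin.snoc m 1) - ptildeMulti k (n + 1) (Fin.snoc m 0) =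
        (if k = 0 then 0 else ptildeMulti (k - 1) n m)) ∧
    (∀ M : Fin n → ℕ, ∀ mq : Fin n → ℚ,
      (mq = fun i => if i.val < 2 then (M i : ℚ) + 1/2 else (M i : ℚ)) →
      (k + 1 : ℚ) * ptildeMulti (k + 1) n mq =
        ((∑ i, mq i) - k - 1) * ptildeMulti k n mq +
          ∑ i : Fin n,
            (if i.val < 2 then
              ∑ J ∈ Finset.range (M i),
                (2 * (J : ℚ) + 1) * ptildeMulti k n (Function.update mq i ((J : ℚ) + 1/2))
            else
              ∑ j ∈ Finset.Ico 1 (M i),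
                (2 * (j : ℚ)) * ptildeMulti k n (Function.update mq i (j : ℚ)))) := by
  constructor
  · intro m
    exact dilaton k n hn m
  · intro M mq hmq
    exact string_eq k n hn M mq hmq
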